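/- Let A be a formally real integral domain which is an ℝ-algebra. For all f, h ∈ Quaternion A with f ≠ 0 and h ≠ 0, the product f * h is scalar (has zero vector part) if and only if f and star h are linearly dependent over A, i.e. there exist α, β ∈ A, not both zero, with α·f + β·(star h) = 0. (Second claim of Remark 4.2.) -/

import Mathlib

open Quaternion

/-- `q` is scalar if its vector part vanishes. -/
def IsScalarQ {A : Type*} [CommRing A] (q : Quaternion A) : Prop := q.im = 0

/-- `A` is formally real: a sum of four squares vanishes only trivially. -/
def FormallyRealFour (A : Type*) [CommRing A] : Prop :=
  ∀ a b c d : A, a ^ 2 + b ^ 2 + c ^ 2 + d ^ 2 = 0 → a = 0 ∧ b = 0 ∧ c = 0 ∧ d = 0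

theorem normSq_ne_zero_of_FR {A : Type*} [CommRing A] (hFR : FormallyRealFour A)
    {q : Quaternion A} (hq : q ≠ 0) : normSq q ≠ 0 := by
  intro h0
  rw [Quaternion.normSq_def'] at h0
  obtain ⟨h1, h2, h3, h4⟩ := hFR _ _ _ _ h0
  exact hq (by ext <;> assumption)

theorem coe_mul_eq_zero {A : Type*} [CommRing A] [IsDomain A] {α : A} {q : Quaternion A}
    (h : (α : Quaternion A) * q = 0) (hα : α ≠ 0) : q = 0 := by
  rw [Quaternion.coe_mul_eq_smul] at h
  ext <;>
  · have := congrArg QuaternionAlgebra.re h <;> have hi := congrArg QuaternionAlgebra.imI h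
    have hj := congrArg QuaternionAlgebra.imJ h <;> have hk := congrArg QuaternionAlgebra.imK h
    simp [smul_eq_mul] at this hi hj hk
    simp <;> tauto

theorem mul_scalar_iff_linearly_dependent {A : Type*} [CommRing A] [IsDomain A] [Algebra ℝ A]
    (hFR : FormallyRealFour A) (f h : Quaternion A) (hf : f ≠ 0) (hh : h ≠ 0) :
    IsScalarQ (f * h) ↔
      ∃ α β : A, (α ≠ 0 ∨ β ≠ 0) ∧
        (α : Quaternion A) * f + (β : Quaternion A) * star h = 0 := by
  constructor
  · intro hs
    refine ⟨normSq h, -(f * h).re, Or.inl (normSq_ne_zero_of_FR hFR hh), ?_⟩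
    have hfh : f * h = ((f * h).re : Quaternion A) := by
      conv_lhs => rw [← Quaternion.re_add_im (f * h)]
      rw [hs, add_zero]
    have : ((normSq h : A) : Quaternion A) * f = ((f * h).re : Quaternion A) * star h := by
      calc ((normSq h : A) : Quaternion A) * f = f * (h * star h) := by
            rw [Quaternion.self_mul_star]; exact (Quaternion.coe_commutes _ _)
        _ = (f * h) * star h := by rw [mul_assoc]
        _ = ((f * h).re : Quaternion A) * star h := by rw [← hfh]
    rw [this]
    push_cast [Quaternion.coe_neg]
    rw [neg_mul, add_neg_cancel]
  · rintro ⟨α, β, hne, heq⟩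
    by_cases hα : α = 0
    · exfalso
      subst hα
      simp only [Quaternion.coe_zero, zero_mul, zero_add] at heq
      rcases hne with hc | hβ
      · exact hc rfl
      · exact hh (by simpa using coe_mul_eq_zero heq hβ)
    · have key : (α : Quaternion A) * (f * h) = (-(β * normSq h) : A) := by
        have : (α : Quaternion A) * f = -((β : Quaternion A) * star h) :=
          eq_neg_of_add_eq_zero_left heq
        calc (α : Quaternion A) * (f * h) = ((α : Quaternion A) * f) * h := by
              rw [mul_assoc]
          _ = -((β : Quaternion A) * (star h * h)) := by rw [this, neg_mul, mul_assoc]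
          _ = (-(β * normSq h) : A) := by rw [Quaternion.star_mul_self]; push_cast; ring
      unfold IsScalarQ
      rw [Quaternion.coe_mul_eq_smul] at key
      have hi := congrArg QuaternionAlgebra.imI key
      have hj := congrArg QuaternionAlgebra.imJ key
      have hk := congrArg QuaternionAlgebra.imK key
      simp only [Quaternion.imI_smul, Quaternion.imJ_smul, Quaternion.imK_smul,
        Quaternion.imI_coe, Quaternion.imJ_coe, Quaternion.imK_coe, smul_eq_mul] at hi hj hk
      ext <;> simp only [Quaternion.imI_im, Quaternion.imJ_im, Quaternion.imK_im,
        Quaternion.re_im, Quaternion.imI_zero, Quaternion.imJ_zero, Quaternion.imK_zero,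
        Quaternion.re_zero] <;> first
        | rfl
        | exact (mul_eq_zero.mp hi).resolve_left hα
        | exact (mul_eq_zero.mp hj).resolve_left hα
        | exact (mul_eq_zero.mp hk).resolve_left hα
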